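/- Let P be a finite set of l colors, X an ideal of edge P-colored complete graphs under the discrete containment, and for each color b let Y^(b) be the image of X under the recoloring R_b (edges colored b become 1, all others 2). Then for every n ≥ 1 and every color c, |Y^(c)_n| ≤ |X_n| ≤ ∏_{b ∈ P} |Y^(b)_n|, where X_n denotes the set of elements of X of size n. -/
import Mathlib


/-- A (directed representation of an) edge: a pair of vertices `p` with `p.1 < p.2`. -/
abbrev Edge (n : ℕ) := {p : Fin n × Fin n // p.1 < p.2}

/-- An edge-`C`-colored complete graph: a number of vertices together with a coloring
of all edges by elements of `C`. -/
abbrev Coloring (C : Type) := (n : ℕ) × (Edge n → C)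

/-- Build an edge from natural numbers `i < j < n`. -/
def mkE {n : ℕ} (i j : ℕ) (hij : i < j) (hj : j < n) : Edge n :=
  ⟨(⟨i, lt_trans hij hj⟩, ⟨j, hj⟩), Fin.mk_lt_mk.mpr hij⟩

/-- The image of an edge under a strictly increasing vertex map. -/
def edgeMap {a b : ℕ} (f : Fin a → Fin b) (hf : StrictMono f) (e : Edge a) : Edge b :=
  ⟨(f e.1.1, f e.1.2), hf e.2⟩

/-- Containment of colorings: `K ⪯ L` via a strictly increasing vertex map that sends
the color of each edge to a `le`-larger color. -/
def ColLe {C : Type} (le : C → C → Prop) (K L : Coloring C) : Prop :=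
  ∃ f : Fin K.1 → Fin L.1, ∃ hf : StrictMono f,
    ∀ e : Edge K.1, le (K.2 e) (L.2 (edgeMap f hf e))

/-- A lower ideal of colorings. -/
def IsIdeal {C : Type} (le : C → C → Prop) (X : Set (Coloring C)) : Prop :=
  ∀ K L : Coloring C, ColLe le K L → L ∈ X → K ∈ X

/-- The recoloring `R_b`: edges of color `b` get color `0`, all other edges get color `1`. -/
def Rb {P : Type} [DecidableEq P] (b : P) (K : Coloring P) : Coloring (Fin 2) :=
  ⟨K.1, fun e => if K.2 e = b then 0 else 1⟩

def toFn {C : Type} {p : Coloring C → Prop} {n : ℕ}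
    (K : {K : Coloring C // p K ∧ K.1 = n}) : Edge n → C :=
  fun e => K.val.2 ⟨(Fin.cast K.prop.2.symm e.1.1, Fin.cast K.prop.2.symm e.1.2), e.2⟩

theorem toFn_inj {C : Type} {p : Coloring C → Prop} {n : ℕ} :
    Function.Injective (toFn (C := C) (p := p) (n := n)) := by
  rintro ⟨⟨m, f⟩, hp, rfl⟩ ⟨⟨m', f'⟩, hp', h'⟩ h
  obtain rfl : m = m' := h'.symm
  refine Subtype.ext (Sigma.ext rfl (heq_of_eq (funext fun e => ?_)))
  have := congrFun h e
  simpa [toFn, Fin.cast] using this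

instance finSub {C : Type} [Finite C] {p : Coloring C → Prop} {n : ℕ} :
    Finite {K : Coloring C // p K ∧ K.1 = n} :=
  Finite.of_injective _ toFn_inj

/-- For an ideal `X` of edge `P`-colored complete graphs under discrete
containment and its recolorings `Y^(b) = R_b(X)`, for every `n ≥ 1` and color `c`:
`|Y^(c)_n| ≤ |X_n| ≤ ∏_b |Y^(b)_n|`. -/
theorem stmt_8 {P : Type} [Fintype P] [DecidableEq P]
    (X : Set (Coloring P)) (hX : IsIdeal (· = ·) X) (n : ℕ) (hn : 1 ≤ n) (c : P) :
    Nat.card {K : Coloring (Fin 2) // K ∈ Rb c '' X ∧ K.1 = n} ≤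
      Nat.card {K : Coloring P // K ∈ X ∧ K.1 = n} ∧
    Nat.card {K : Coloring P // K ∈ X ∧ K.1 = n} ≤
      ∏ b : P, Nat.card {K : Coloring (Fin 2) // K ∈ Rb b '' X ∧ K.1 = n} := by
  constructor
  · refine Nat.card_le_card_of_surjective
      (fun K => ⟨Rb c K.val, ⟨K.val, K.prop.1, rfl⟩, K.prop.2⟩) ?_
    rintro ⟨L, ⟨K, hKX, rfl⟩, hL⟩
    exact ⟨⟨K, hKX, hL⟩, rfl⟩
  · have key : Nat.card {K : Coloring P // K ∈ X ∧ K.1 = n} ≤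
        Nat.card (∀ b : P, {K : Coloring (Fin 2) // K ∈ Rb b '' X ∧ K.1 = n}) := by
      refine Nat.card_le_card_of_injective
        (fun K b => ⟨Rb b K.val, ⟨K.val, K.prop.1, rfl⟩, K.prop.2⟩) ?_
      rintro ⟨⟨m, f⟩, hp, rfl⟩ ⟨⟨m', f'⟩, hp', h'⟩ h
      obtain rfl : m = m' := h'.symm
      refine Subtype.ext (Sigma.ext rfl (heq_of_eq (funext fun e => ?_)))
      have hb := congrArg Subtype.val (congrFun h (f e))
      have := eq_of_heq (Sigma.ext_iff.mp hb).2
      have := congrFun this e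
      simp only [Rb, if_pos rfl] at this
      by_contra hne
      rw [if_neg (fun hh : f' e = f e => hne hh.symm)] at this
      exact absurd this (by decide)
    calc _ ≤ _ := key
    _ = _ := Nat.card_pi
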